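/- Let Z, X ∈ ℝ^{n×τ}, U ∈ ℝ^{m×τ}, with Σ = {(A,B) : Z = A·X + B·U} nonempty. If there exists K such that A + B·K is stable for all (A,B) ∈ Σ, then X has full row rank. -/

import Mathlib

open Matrix

def IsStable {n : Type*} [Fintype n] [DecidableEq n] (M : Matrix n n ℝ) : Prop :=
  ∀ μ ∈ spectrum ℂ (M.map (algebraMap ℝ ℂ)), ‖μ‖ < 1

lemma eval_charpoly' {k : ℕ} (M : Matrix (Fin k) (Fin k) ℂ) (μ : ℂ) :
    M.charpoly.eval μ = ((Matrix.diagonal fun _ => μ) - M).det := by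
  rw [Matrix.charpoly, ← Polynomial.coe_evalRingHom, RingHom.map_det]
  congr 1
  ext i j
  simp [Matrix.charmatrix_apply, Matrix.diagonal, Matrix.map_apply]
  by_cases h : i = j <;> simp [h]

lemma root_mem_spectrum {k : ℕ} (M : Matrix (Fin k) (Fin k) ℂ) (μ : ℂ)
    (h : μ ∈ M.charpoly.roots) : μ ∈ spectrum ℂ M := by
  have hroot : M.charpoly.eval μ = 0 := (Polynomial.mem_roots'.mp h).2
  rw [spectrum.mem_iff, Matrix.isUnit_iff_isUnit_det, isUnit_iff_ne_zero, not_not]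
  have : algebraMap ℂ (Matrix (Fin k) (Fin k) ℂ) μ - M
      = (Matrix.diagonal fun _ => μ) - M := by
    ext i j
    simp [Matrix.algebraMap_matrix_apply, Matrix.sub_apply, Matrix.diagonal]
  rw [this, ← eval_charpoly' M μ, hroot]

theorem stmt6 {n m τ : ℕ}
    (Z X : Matrix (Fin n) (Fin τ) ℝ) (U : Matrix (Fin m) (Fin τ) ℝ)
    (hne : ∃ A : Matrix (Fin n) (Fin n) ℝ, ∃ B : Matrix (Fin n) (Fin m) ℝ,
      Z = A * X + B * U)
    (hstab : ∃ K : Matrix (Fin m) (Fin n) ℝ,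
      ∀ A : Matrix (Fin n) (Fin n) ℝ, ∀ B : Matrix (Fin n) (Fin m) ℝ,
        Z = A * X + B * U → IsStable (A + B * K)) :
    X.rank = n := by
  by_contra hrank
  have hle : X.rank ≤ n := by simpa using X.rank_le_card_height
  have hlt : X.rank < n := lt_of_le_of_ne hle hrank
  -- find v ≠ 0 in the left kernel of X
  have hrt : X.transpose.rank < n := by rwa [Matrix.rank_transpose]
  have hker : LinearMap.ker X.transpose.mulVecLin ≠ ⊥ := by
    intro hk
    have := LinearMap.finrank_range_add_finrank_ker X.transpose.mulVecLin
    rw [hk, finrank_bot] at this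
    simp only [add_zero] at this
    rw [Matrix.rank] at hrt
    rw [Module.finrank_fintype_fun_eq_card, Fintype.card_fin] at this
    omega
  obtain ⟨v, hv0, hvne⟩ := Submodule.exists_mem_ne_zero_of_ne_bot hker
  have hvX : X.vecMul v = 0 := by
    have : X.transpose.mulVec v = 0 := hv0
    rwa [Matrix.mulVec_transpose] at this
  obtain ⟨K, hK⟩ := hstab
  obtain ⟨A₀, B₀, hZ₀⟩ := hne
  set M₀ := A₀ + B₀ * K with hM₀
  set S : ℝ := ∑ i, v i ^ 2 with hS
  have hSpos : 0 < S := by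
    obtain ⟨i, hi⟩ := Function.ne_iff.mp hvne
    exact Finset.sum_pos' (fun j _ => sq_nonneg _) ⟨i, Finset.mem_univ i, sq_pos_of_ne_zero hi⟩
  set t : ℝ := (n + 1 + |M₀.trace|) / S with ht
  set A' := A₀ + t • Matrix.vecMulVec v v with hA'
  have hvvX : Matrix.vecMulVec v v * X = 0 := by
    ext i j
    have : (X.vecMul v) j = 0 := by rw [hvX]; rfl
    simp only [Matrix.mul_apply, Matrix.vecMulVec_apply, Matrix.zero_apply, mul_assoc,
      ← Finset.mul_sum]
    simpa [Matrix.vecMul, dotProduct] using mul_eq_zero_of_right (v i) this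
  have hZ' : Z = A' * X + B₀ * U := by
    rw [hA', Matrix.add_mul, Matrix.smul_mul, hvvX, smul_zero, add_zero, ← hZ₀]
  have hstab' : IsStable (M₀ + t • Matrix.vecMulVec v v) := by
    have := hK A' B₀ hZ'
    have harr : A' + B₀ * K = M₀ + t • Matrix.vecMulVec v v := by
      rw [hA', hM₀]; abel
    rwa [harr] at this
  set M := M₀ + t • Matrix.vecMulVec v v with hM
  -- trace computation
  have htrvv : (Matrix.vecMulVec v v).trace = S := by
    simp [Matrix.trace, Matrix.vecMulVec_apply, hS, sq]
  have htrM : M.trace = M₀.trace + (n + 1 + |M₀.trace|) := by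
    rw [hM, Matrix.trace_add, Matrix.trace_smul, htrvv, smul_eq_mul, ht,
      div_mul_cancel₀ _ (ne_of_gt hSpos)]
  have htrbig : (n : ℝ) < M.trace := by
    rw [htrM]
    have := abs_nonneg M₀.trace
    have := neg_abs_le M₀.trace
    linarith
  -- complex side
  set Mc := M.map (algebraMap ℝ ℂ) with hMc
  have htrc : Mc.trace = (M.trace : ℂ) := by
    simp [hMc, Matrix.trace, Matrix.map_apply]
  have hcard : Multiset.card Mc.charpoly.roots = n := by
    have hsp := IsAlgClosed.splits Mc.charpoly
    have := (Polynomial.splits_iff_card_roots).mp hsp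
    rwa [Mc.charpoly_natDegree_eq_dim, Fintype.card_fin] at this
  have hsum : Mc.trace = Mc.charpoly.roots.sum := Matrix.trace_eq_sum_roots_charpoly Mc
  have hbound : ‖Mc.trace‖ ≤ (n : ℝ) := by
    rw [hsum]
    calc ‖Mc.charpoly.roots.sum‖ ≤ (Mc.charpoly.roots.map norm).sum := by
          exact norm_multiset_sum_le _
      _ ≤ Multiset.card (Mc.charpoly.roots.map norm) • (1 : ℝ) := by
          apply Multiset.sum_le_card_nsmul
          intro x hx
          obtain ⟨μ, hμ, rfl⟩ := Multiset.mem_map.mp hx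
          exact le_of_lt (hstab' μ (root_mem_spectrum _ _ hμ))
      _ = (n : ℝ) := by rw [Multiset.card_map, hcard]; simp
  rw [htrc, Complex.norm_real, Real.norm_eq_abs] at hbound
  have : M.trace ≤ |M.trace| := le_abs_self _
  linarith
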